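/- As ρ tends to -1 from above, Φ₂(x,y;ρ) converges to max(Φ(x) + Φ(y) - 1, 0) for every x, y ∈ ℝ. -/

import Mathlib

open MeasureTheory Real Set Filter

noncomputable def stdPdf (x : ℝ) : ℝ := (Real.sqrt (2 * Real.pi))⁻¹ * Real.exp (-(x ^ 2) / 2)

noncomputable def stdCdf (x : ℝ) : ℝ := ∫ v in Set.Iio x, stdPdf v

noncomputable def Phi2 (μ ν ρ : ℝ) : ℝ :=
  ∫ v in Set.Iio μ, stdCdf ((ν - ρ * v) / Real.sqrt (1 - ρ ^ 2)) * stdPdf v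

noncomputable def phi2 (μ ν ρ : ℝ) : ℝ :=
  (2 * Real.pi * Real.sqrt (1 - ρ ^ 2))⁻¹ *
    Real.exp (-(μ ^ 2 - 2 * ρ * μ * ν + ν ^ 2) / (2 * (1 - ρ ^ 2)))

lemma stdPdf_nonneg (v : ℝ) : 0 ≤ stdPdf v := by
  unfold stdPdf; positivity

lemma stdPdf_eq (v : ℝ) :
    stdPdf v = (Real.sqrt (2 * Real.pi))⁻¹ * Real.exp (-(1/2 : ℝ) * v ^ 2) := by
  unfold stdPdf; ring_nf

lemma continuous_stdPdf : Continuous stdPdf := by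
  unfold stdPdf; fun_prop

lemma integrable_stdPdf : Integrable stdPdf := by
  have h : Integrable (fun v : ℝ => Real.exp (-(1/2 : ℝ) * v ^ 2)) :=
    integrable_exp_neg_mul_sq (by norm_num)
  have h2 := h.const_mul (Real.sqrt (2 * Real.pi))⁻¹
  have : stdPdf = fun v => (Real.sqrt (2 * Real.pi))⁻¹ * Real.exp (-(1/2 : ℝ) * v ^ 2) :=
    funext stdPdf_eq
  rw [this]; exact h2

lemma sqrt_two_pi_pos : 0 < Real.sqrt (2 * Real.pi) :=
  Real.sqrt_pos.2 (by positivity)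

lemma integral_stdPdf : ∫ v, stdPdf v = 1 := by
  have h1 : ∫ v : ℝ, Real.exp (-(1/2 : ℝ) * v ^ 2) = Real.sqrt (Real.pi / (1/2)) :=
    integral_gaussian (1/2)
  have h2 : Real.pi / (1/2 : ℝ) = 2 * Real.pi := by ring
  calc ∫ v, stdPdf v
      = ∫ v, (Real.sqrt (2 * Real.pi))⁻¹ * Real.exp (-(1/2 : ℝ) * v ^ 2) := by
        simp_rw [stdPdf_eq]
    _ = (Real.sqrt (2 * Real.pi))⁻¹ * ∫ v, Real.exp (-(1/2 : ℝ) * v ^ 2) :=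
        integral_const_mul _ _
    _ = (Real.sqrt (2 * Real.pi))⁻¹ * Real.sqrt (2 * Real.pi) := by rw [h1, h2]
    _ = 1 := inv_mul_cancel₀ (ne_of_gt sqrt_two_pi_pos)

lemma stdCdf_nonneg (x : ℝ) : 0 ≤ stdCdf x :=
  setIntegral_nonneg measurableSet_Iio fun v _ => stdPdf_nonneg v

lemma stdCdf_le_one (x : ℝ) : stdCdf x ≤ 1 := by
  have := setIntegral_le_integral (s := Set.Iio x) integrable_stdPdf
    (Filter.Eventually.of_forall stdPdf_nonneg)
  rwa [integral_stdPdf] at this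

lemma stdCdf_mono : Monotone stdCdf := fun a b hab =>
  setIntegral_mono_set integrable_stdPdf.integrableOn
    (Filter.Eventually.of_forall stdPdf_nonneg)
    (HasSubset.Subset.eventuallyLE (Set.Iio_subset_Iio hab))

lemma measurable_stdCdf : Measurable stdCdf := stdCdf_mono.measurable

lemma stdCdf_eq_Iic (x : ℝ) : stdCdf x = ∫ v in Set.Iic x, stdPdf v :=
  (integral_Iic_eq_integral_Iio).symm

lemma stdCdf_neg (y : ℝ) : stdCdf (-y) = 1 - stdCdf y := by
  have h2 : ∫ v in Set.Ioi y, stdPdf (-v) = ∫ v in Set.Iic (-y), stdPdf v :=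
    integral_comp_neg_Ioi y stdPdf
  have heven : ∀ v : ℝ, stdPdf (-v) = stdPdf v := by
    intro v; unfold stdPdf; rw [neg_pow]; ring_nf
  simp_rw [heven] at h2
  have h3 : (∫ v in Set.Iic y, stdPdf v) + ∫ v in Set.Ioi y, stdPdf v = ∫ v, stdPdf v :=
    intervalIntegral.integral_Iic_add_Ioi integrable_stdPdf.integrableOn integrable_stdPdf.integrableOn
  rw [integral_stdPdf] at h3
  rw [stdCdf_eq_Iic, ← h2, stdCdf_eq_Iic]
  linarith

lemma tendsto_stdCdf_atTop : Filter.Tendsto stdCdf Filter.atTop (nhds 1) := by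
  have h := tendsto_integral_filter_of_dominated_convergence (μ := volume) (l := Filter.atTop)
    (F := fun t v => Set.indicator (Set.Iio t) stdPdf v) (f := stdPdf) stdPdf
    (Filter.Eventually.of_forall fun t =>
      (continuous_stdPdf.aestronglyMeasurable).indicator measurableSet_Iio)
    (Filter.Eventually.of_forall fun t => Filter.Eventually.of_forall fun v => by
      calc ‖Set.indicator (Set.Iio t) stdPdf v‖ ≤ ‖stdPdf v‖ :=
            norm_indicator_le_norm_self _ _
        _ = stdPdf v := Real.norm_of_nonneg (stdPdf_nonneg v))
    integrable_stdPdf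
    (Filter.Eventually.of_forall fun v => by
      refine Filter.Tendsto.congr' ?_ tendsto_const_nhds
      filter_upwards [Filter.eventually_gt_atTop v] with t ht
      exact (Set.indicator_of_mem (Set.mem_Iio.2 ht) stdPdf).symm)
  simp only [integral_indicator measurableSet_Iio, integral_stdPdf] at h
  exact h

lemma tendsto_stdCdf_atBot : Filter.Tendsto stdCdf Filter.atBot (nhds 0) := by
  have h := tendsto_integral_filter_of_dominated_convergence (μ := volume) (l := Filter.atBot)
    (F := fun t v => Set.indicator (Set.Iio t) stdPdf v) (f := fun _ => (0 : ℝ)) stdPdf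
    (Filter.Eventually.of_forall fun t =>
      (continuous_stdPdf.aestronglyMeasurable).indicator measurableSet_Iio)
    (Filter.Eventually.of_forall fun t => Filter.Eventually.of_forall fun v => by
      calc ‖Set.indicator (Set.Iio t) stdPdf v‖ ≤ ‖stdPdf v‖ :=
            norm_indicator_le_norm_self _ _
        _ = stdPdf v := Real.norm_of_nonneg (stdPdf_nonneg v))
    integrable_stdPdf
    (Filter.Eventually.of_forall fun v => by
      refine Filter.Tendsto.congr' ?_ tendsto_const_nhds
      filter_upwards [Filter.eventually_le_atBot v] with t ht
      exact (Set.indicator_of_notMem (by simpa using ht) stdPdf).symm)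
  simp only [integral_indicator measurableSet_Iio, integral_zero] at h
  exact h

lemma limit_integral (x y : ℝ) :
    ∫ v in Set.Iio x, Set.indicator (Set.Ioi (-y)) stdPdf v
      = max (stdCdf x + stdCdf y - 1) 0 := by
  rw [setIntegral_indicator measurableSet_Ioi, Set.inter_comm, Set.Ioi_inter_Iio]
  have hkey : stdCdf x + stdCdf y - 1 = stdCdf x - stdCdf (-y) := by
    rw [stdCdf_neg]; ring
  rcases le_or_gt x (-y) with h | h
  · rw [Set.Ioo_eq_empty (by intro hlt; exact absurd (h.trans_lt hlt) (lt_irrefl _)),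
      Measure.restrict_empty, integral_zero_measure]
    symm
    rw [max_eq_right]
    rw [hkey]
    linarith [stdCdf_mono h]
  · have hunion : Set.Iic (-y) ∪ Set.Ioc (-y) x = Set.Iic x := Set.Iic_union_Ioc_eq_Iic h.le
    have hsplit : (∫ v in Set.Iic (-y), stdPdf v) + ∫ v in Set.Ioc (-y) x, stdPdf v
        = ∫ v in Set.Iic x, stdPdf v := by
      rw [← hunion, setIntegral_union (Set.Iic_disjoint_Ioc le_rfl) measurableSet_Ioc
        integrable_stdPdf.integrableOn integrable_stdPdf.integrableOn]
    rw [← integral_Ioc_eq_integral_Ioo]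
    rw [← stdCdf_eq_Iic, ← stdCdf_eq_Iic] at hsplit
    have hnn : 0 ≤ stdCdf x - stdCdf (-y) := sub_nonneg.2 (stdCdf_mono h.le)
    rw [hkey]
    rw [max_eq_left (by linarith)]
    linarith

theorem stmt4 (x y : ℝ) :
    Filter.Tendsto (fun ρ => Phi2 x y ρ) (nhdsWithin (-1) (Set.Ioo (-1 : ℝ) 1))
      (nhds (max (stdCdf x + stdCdf y - 1) 0)) := by
  set l := nhdsWithin (-1 : ℝ) (Set.Ioo (-1 : ℝ) 1)
  have hsqrt : Filter.Tendsto (fun ρ : ℝ => Real.sqrt (1 - ρ ^ 2)) l (nhdsWithin 0 (Set.Ioi 0)) := by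
    rw [tendsto_nhdsWithin_iff]
    constructor
    · have hc : Continuous fun ρ : ℝ => Real.sqrt (1 - ρ ^ 2) := by fun_prop
      have := (hc.tendsto (-1)).mono_left (nhdsWithin_le_nhds (s := Set.Ioo (-1:ℝ) 1))
      simp only [neg_one_sq, sub_self, Real.sqrt_zero] at this
      exact this
    · refine eventually_nhdsWithin_of_forall fun ρ hρ => ?_
      have h1 : ρ ^ 2 < 1 := by
        rw [sq_lt_one_iff_abs_lt_one, abs_lt]; exact ⟨hρ.1, hρ.2⟩
      exact Real.sqrt_pos.2 (by linarith)
  have hinv : Filter.Tendsto (fun ρ : ℝ => (Real.sqrt (1 - ρ ^ 2))⁻¹) l Filter.atTop :=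
    tendsto_inv_nhdsGT_zero.comp hsqrt
  -- dominated convergence
  have h := tendsto_integral_filter_of_dominated_convergence
    (μ := volume.restrict (Set.Iio x)) (l := l)
    (F := fun ρ v => stdCdf ((y - ρ * v) / Real.sqrt (1 - ρ ^ 2)) * stdPdf v)
    (f := fun v => Set.indicator (Set.Ioi (-y)) stdPdf v) stdPdf
    (Filter.Eventually.of_forall fun ρ => by
      refine AEStronglyMeasurable.mul ?_ continuous_stdPdf.aestronglyMeasurable.restrict
      exact ((measurable_stdCdf.comp ((measurable_const.sub
        (measurable_id.const_mul ρ)).div_const _)).aestronglyMeasurable).restrict)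
    (Filter.Eventually.of_forall fun ρ => Filter.Eventually.of_forall fun v => by
      rw [Real.norm_of_nonneg (mul_nonneg (stdCdf_nonneg _) (stdPdf_nonneg v))]
      calc stdCdf ((y - ρ * v) / Real.sqrt (1 - ρ ^ 2)) * stdPdf v
          ≤ 1 * stdPdf v := mul_le_mul_of_nonneg_right (stdCdf_le_one _) (stdPdf_nonneg v)
        _ = stdPdf v := one_mul _)
    integrable_stdPdf.restrict
    (by
      have hae : ∀ᵐ v ∂(volume.restrict (Set.Iio x)), v ≠ -y := by
        refine ae_restrict_of_ae ?_
        rw [ae_iff]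
        have : {a : ℝ | ¬ a ≠ -y} = {-y} := by ext a; simp
        rw [this]
        exact measure_singleton _
      filter_upwards [hae] with v hv
      have hnum : Filter.Tendsto (fun ρ : ℝ => y - ρ * v) l (nhds (y + v)) := by
        have hc : Continuous fun ρ : ℝ => y - ρ * v := by fun_prop
        have := (hc.tendsto (-1)).mono_left (nhdsWithin_le_nhds (s := Set.Ioo (-1:ℝ) 1))
        simp only [neg_one_mul, sub_neg_eq_add] at this
        exact this
      rcases lt_or_gt_of_ne (fun hvy => hv (by linarith [hvy] : v = -y) : y + v ≠ 0) with hlt | hgt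
      · -- y + v < 0 : argument → -∞, stdCdf → 0, limit = 0 = indicator
        have harg : Filter.Tendsto (fun ρ : ℝ => (y - ρ * v) / Real.sqrt (1 - ρ ^ 2)) l
            Filter.atBot := by
          simp_rw [div_eq_mul_inv]
          exact Filter.Tendsto.neg_mul_atTop hlt hnum hinv
        have := (tendsto_stdCdf_atBot.comp harg).mul_const (stdPdf v)
        rw [Set.indicator_of_notMem (by simp [Set.mem_Ioi]; linarith) stdPdf]
        simpa using this
      · have harg : Filter.Tendsto (fun ρ : ℝ => (y - ρ * v) / Real.sqrt (1 - ρ ^ 2)) l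
            Filter.atTop := by
          simp_rw [div_eq_mul_inv]
          exact Filter.Tendsto.pos_mul_atTop hgt hnum hinv
        have := (tendsto_stdCdf_atTop.comp harg).mul_const (stdPdf v)
        rw [Set.indicator_of_mem (by simp [Set.mem_Ioi]; linarith) stdPdf]
        simpa using this)
  rw [limit_integral x y] at h
  exact h
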